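/- Let ψ: ℝ → ℝ be C¹ with ψ(0)=1, ψ even, non-negative, and suppose there exist C>0 and δ>1 such that |ψ(x)| + |x·ψ'(x)| ≤ C·(1+x²)^{-δ/2} for all x ∈ ℝ. Let μ be a probability measure on ℝ with Lebesgue decomposition μ = μ_ac + μ_s, and let (c,d) be a bounded interval. If limsup_{a→0⁺} |(ψ̃_a * μ)(x)| < ∞ for every x ∈ (c,d), where ψ̃_a(x) = (1/a)·ψ(x/a), then the singular part μ_s gives zero mass to (c,d), i.e. μ_s((c,d)) = 0. -/

import Mathlib

open MeasureTheory Filter Real Set Topology Metric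

/-- Remark 2.10: if `limsup_{a→0⁺} |(ψ̃_a * μ)(x)| < ∞` for every `x ∈ (c,d)`, then the
singular part of `μ` (with respect to Lebesgue measure) gives zero mass to `(c,d)`. -/
theorem bounded_limsup_implies_no_singular_part
    (ψ : ℝ → ℝ) (hC1 : ContDiff ℝ 1 ψ) (hψ0 : ψ 0 = 1)
    (heven : ∀ x : ℝ, ψ (-x) = ψ x) (hpos : ∀ x : ℝ, 0 ≤ ψ x)
    (hdecay : ∃ C > (0:ℝ), ∃ δ > (1:ℝ), ∀ x : ℝ,
      |ψ x| + |x * deriv ψ x| ≤ C * (1 + x ^ 2) ^ (-δ / 2))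
    (μ : Measure ℝ) [IsProbabilityMeasure μ]
    (c d : ℝ)
    (hbd : ∀ x ∈ Ioo c d,
      Filter.limsup
        (fun a : ℝ => ((|∫ y : ℝ, (1 / a) * ψ ((x - y) / a) ∂μ| : ℝ) : EReal))
        (𝓝[>] 0) < ⊤) :
    μ.singularPart volume (Ioo c d) = 0 := by
  obtain ⟨C, hC, δ, hδ, hdec⟩ := hdecay
  -- ψ is bounded by C
  have hψbd : ∀ t : ℝ, ψ t ≤ C := by
    intro t
    have h1 := hdec t
    have h2 : (1 + t ^ 2 : ℝ) ^ (-δ / 2) ≤ 1 := by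
      apply Real.rpow_le_one_of_one_le_of_nonpos
      · nlinarith [sq_nonneg t]
      · linarith
    have h3 : ψ t ≤ |ψ t| + |t * deriv ψ t| := by
      have := abs_nonneg (t * deriv ψ t)
      have := le_abs_self (ψ t)
      linarith
    nlinarith
  -- ψ ≥ 1/2 near 0
  obtain ⟨ε, hε, hψhalf⟩ : ∃ ε > (0:ℝ), ∀ t : ℝ, |t| ≤ ε → 1/2 ≤ ψ t := by
    have hev : ∀ᶠ t in 𝓝 (0:ℝ), 1/2 < ψ t := by
      have hct : ContinuousAt ψ 0 := hC1.continuous.continuousAt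
      have h' : (1:ℝ)/2 < ψ 0 := by rw [hψ0]; norm_num
      exact hct.eventually (eventually_gt_nhds h')
    rcases Metric.eventually_nhds_iff.1 hev with ⟨ε, hε, hball⟩
    refine ⟨ε/2, by linarith, fun t ht => ?_⟩
    have : dist t 0 < ε := by
      rw [Real.dist_eq, sub_zero]
      exact lt_of_le_of_lt ht (by linarith)
    exact (hball this).le
  set ν := μ.singularPart volume with hν
  have hsing : (volume : Measure ℝ) ⟂ₘ ν :=
    (μ.mutuallySingular_singularPart volume).symm
  have hae : ∀ᵐ x ∂ν, Tendsto (fun r => volume (closedBall x r) / ν (closedBall x r))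
      (𝓝[>] 0) (𝓝 0) := by
    filter_upwards [(Besicovitch.vitaliFamily ν).ae_eventually_measure_zero_of_singular hsing]
      with x hx
    exact hx.comp (Besicovitch.tendsto_filterAt ν x)
  -- every x in Ioo c d fails the a.e. property
  have hsubset : Ioo c d ⊆ {x | ¬ Tendsto (fun r => volume (closedBall x r) / ν (closedBall x r))
      (𝓝[>] 0) (𝓝 0)} := by
    intro x hx hT
    obtain ⟨M, hM1, _⟩ := EReal.exists_between_coe_real (hbd x hx)
    have hevM : ∀ᶠ a in 𝓝[>] (0:ℝ), |∫ y : ℝ, (1 / a) * ψ ((x - y) / a) ∂μ| < M := by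
      have h := eventually_lt_of_limsup_lt hM1
      filter_upwards [h] with a ha
      exact_mod_cast ha
    -- M > 0
    obtain ⟨a₀, ha₀⟩ := hevM.exists
    have hM0 : 0 < M := lt_of_le_of_lt (abs_nonneg _) ha₀
    -- key pointwise bound
    have key : ∀ a : ℝ, 0 < a →
        (μ (closedBall x (ε * a))).toReal ≤ 2 * a * |∫ y : ℝ, (1 / a) * ψ ((x - y) / a) ∂μ| := by
      intro a ha
      have hint : Integrable (fun y => (1 / a) * ψ ((x - y) / a)) μ := by
        apply Integrable.mono' (integrable_const (C / a))
        · exact (continuous_const.mul (hC1.continuous.comp (by fun_prop))).aestronglyMeasurable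
        · filter_upwards with y
          rw [norm_mul, Real.norm_eq_abs, Real.norm_eq_abs]
          rw [abs_of_pos (by positivity : (0:ℝ) < 1/a), abs_of_nonneg (hpos _)]
          rw [div_eq_mul_inv C a, mul_comm C a⁻¹, ← one_div]
          exact mul_le_mul_of_nonneg_left (hψbd _) (by positivity)
      have hmono : ∫ y, (closedBall x (ε * a)).indicator (fun _ => 1 / (2 * a)) y ∂μ
          ≤ ∫ y, (1 / a) * ψ ((x - y) / a) ∂μ := by
        apply integral_mono ((integrable_const _).indicator measurableSet_closedBall) hint
        intro y
        by_cases hy : y ∈ closedBall x (ε * a)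
        · rw [Set.indicator_of_mem hy]
          have hdist : |x - y| ≤ ε * a := by
            have h := mem_closedBall.1 hy
            rw [Real.dist_eq] at h
            rw [abs_sub_comm]
            exact h
          have habs : |(x - y) / a| ≤ ε := by
            rw [abs_div, abs_of_pos ha, div_le_iff₀ ha]
            exact hdist
          have hhalf := hψhalf _ habs
          calc 1 / (2 * a) = (1 / a) * (1 / 2) := by ring
            _ ≤ (1 / a) * ψ ((x - y) / a) :=
              mul_le_mul_of_nonneg_left hhalf (by positivity)
        · rw [Set.indicator_of_notMem hy]
          exact mul_nonneg (by positivity) (hpos _)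
      rw [integral_indicator_const _ measurableSet_closedBall, smul_eq_mul] at hmono
      have h2 : ∫ y, (1 / a) * ψ ((x - y) / a) ∂μ
          ≤ |∫ y : ℝ, (1 / a) * ψ ((x - y) / a) ∂μ| := le_abs_self _
      have h3 : (μ (closedBall x (ε * a))).toReal * (1 / (2 * a))
          ≤ |∫ y : ℝ, (1 / a) * ψ ((x - y) / a) ∂μ| := le_trans hmono h2
      calc (μ (closedBall x (ε * a))).toReal
          = ((μ (closedBall x (ε * a))).toReal * (1 / (2 * a))) * (2 * a) := by
            field_simp
        _ ≤ |∫ y : ℝ, (1 / a) * ψ ((x - y) / a) ∂μ| * (2 * a) :=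
            mul_le_mul_of_nonneg_right h3 (by positivity)
        _ = 2 * a * |∫ y : ℝ, (1 / a) * ψ ((x - y) / a) ∂μ| := by ring
    -- transfer tendsto along a ↦ ε * a
    have hεa : Tendsto (fun a : ℝ => ε * a) (𝓝[>] 0) (𝓝[>] 0) := by
      apply tendsto_nhdsWithin_of_tendsto_nhds_of_eventually_within
      · have h : Tendsto (fun a : ℝ => ε * a) (𝓝 0) (𝓝 (ε * 0)) :=
          (continuous_const.mul continuous_id).tendsto 0
        simpa using h.mono_left nhdsWithin_le_nhds
      · filter_upwards [self_mem_nhdsWithin] with a (ha : 0 < a)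
        exact mul_pos hε ha
    have hT' : Tendsto (fun a : ℝ => volume (closedBall x (ε * a)) / ν (closedBall x (ε * a)))
        (𝓝[>] 0) (𝓝 0) := hT.comp hεa
    have hsmall : ∀ᶠ a in 𝓝[>] (0:ℝ),
        volume (closedBall x (ε * a)) / ν (closedBall x (ε * a))
          < ENNReal.ofReal (ε / (2 * M)) := by
      apply hT'.eventually_lt_const
      simp only [ENNReal.ofReal_pos]
      positivity
    obtain ⟨a, ha1, ha2, ha3⟩ := (hsmall.and (hevM.and self_mem_nhdsWithin)).exists
    have ha : (0:ℝ) < a := ha3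
    -- derive the contradiction
    have hμB : μ (closedBall x (ε * a)) < ENNReal.ofReal (2 * a * M) := by
      rw [ENNReal.lt_ofReal_iff_toReal_lt (measure_ne_top μ _)]
      have hk := key a ha
      nlinarith [abs_nonneg (∫ y : ℝ, (1 / a) * ψ ((x - y) / a) ∂μ)]
    have hνB : ν (closedBall x (ε * a)) < ENNReal.ofReal (2 * a * M) :=
      lt_of_le_of_lt (Measure.singularPart_le μ volume _) hμB
    have hvol : volume (closedBall x (ε * a)) = ENNReal.ofReal (2 * (ε * a)) := by
      rw [Real.volume_closedBall]
    rw [hvol] at ha1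
    have hc0 : ENNReal.ofReal (2 * (ε * a)) ≠ 0 := by
      simp only [ne_eq, ENNReal.ofReal_eq_zero, not_le]
      positivity
    have hlt : ENNReal.ofReal (2 * (ε * a))
        < ENNReal.ofReal (ε / (2 * M)) * ν (closedBall x (ε * a)) := by
      rw [← ENNReal.div_lt_iff (Or.inr hc0) (Or.inr ENNReal.ofReal_ne_top)]
      exact ha1
    have hfinal : ENNReal.ofReal (2 * (ε * a)) < ENNReal.ofReal (ε * a) := by
      calc ENNReal.ofReal (2 * (ε * a))
          < ENNReal.ofReal (ε / (2 * M)) * ν (closedBall x (ε * a)) := hlt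
        _ ≤ ENNReal.ofReal (ε / (2 * M)) * ENNReal.ofReal (2 * a * M) :=
            mul_le_mul_right hνB.le _
        _ = ENNReal.ofReal (ε / (2 * M) * (2 * a * M)) := by
            rw [← ENNReal.ofReal_mul (by positivity)]
        _ = ENNReal.ofReal (ε * a) := by
            congr 1
            field_simp
    have hle : (ε * a : ℝ) ≤ 2 * (ε * a) := by nlinarith
    exact absurd hfinal (not_lt.2 (ENNReal.ofReal_le_ofReal hle))
  apply measure_mono_null hsubset
  exact ae_iff.1 hae
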